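/- Robustness condition (Theorem 1): Let E be a real normed vector space, K ≥ 2 a natural number, ε, δ ≥ 0 and p, φ ∈ [0,1], and let M : E → Measure (Fin K → ℝ) be a mechanism of probability measures such that (i) for every x, for (M x)-almost every y and every i, 0 ≤ y i ≤ 1, and (ii) M satisfies (K*ε, K*(1-p)*Real.sqrt(1-φ)*δ)-DP with respect to the adjacency relation ‖x - x'‖ ≤ 1. Define the expected score g i x := ∫ y, y i ∂(M x). If for some input x and some label c : Fin K, g c x > exp(2*K*ε) * (max over i ≠ c of g i x) + (1 + exp(K*ε)) * K*(1-p)*Real.sqrt(1-φ)*δ, then for every α with ‖α‖ ≤ 1 and every i ≠ c, g c (x + α) > g i (x + α); i.e. the predicted label of M on x + α is still c for all attacks of size at most 1. -/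

import Mathlib

open MeasureTheory

lemma layer_trunc {Y : Type*} [MeasurableSpace Y] (μ : Measure Y)
    (f : Y → ℝ) (hf : Measurable f) (h01 : ∀ᵐ y ∂μ, 0 ≤ f y ∧ f y ≤ 1) :
    ∫⁻ y, ENNReal.ofReal (f y) ∂μ = ∫⁻ t in Set.Ioc (0:ℝ) 1, μ {y | t < f y} := by
  rw [lintegral_eq_lintegral_meas_lt μ (h01.mono fun y h => h.1) hf.aemeasurable]
  rw [← Set.Ioc_union_Ioi_eq_Ioi (zero_le_one (α := ℝ)),
    lintegral_union measurableSet_Ioi (Set.Ioc_disjoint_Ioi le_rfl)]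
  have hnull : μ {y | ¬ f y ≤ 1} = 0 := by
    have := h01.mono fun y h => h.2
    exact ae_iff.mp this
  have h0 : ∀ t ∈ Set.Ioi (1:ℝ), μ {y | t < f y} = 0 := by
    intro t ht
    refine measure_mono_null (fun y hy => ?_) hnull
    exact not_le.mpr (lt_trans ht hy)
  rw [setLIntegral_congr_fun (g := fun _ => 0) measurableSet_Ioi h0]
  simp

lemma exp_dp_bound {Y : Type*} [MeasurableSpace Y] (μ ν : Measure Y)
    [IsProbabilityMeasure μ] [IsProbabilityMeasure ν]
    (f : Y → ℝ) (hf : Measurable f)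
    (hμ01 : ∀ᵐ y ∂μ, 0 ≤ f y ∧ f y ≤ 1) (hν01 : ∀ᵐ y ∂ν, 0 ≤ f y ∧ f y ≤ 1)
    (e δ' : ℝ) (he : 0 ≤ e) (hδ' : 0 ≤ δ')
    (hDP : ∀ S : Set Y, MeasurableSet S →
      μ S ≤ ENNReal.ofReal e * ν S + ENNReal.ofReal δ') :
    ∫ y, f y ∂μ ≤ e * ∫ y, f y ∂ν + δ' := by
  have hGν : ∫⁻ y, ENNReal.ofReal (f y) ∂ν ≤ 1 := by
    calc ∫⁻ y, ENNReal.ofReal (f y) ∂ν ≤ ∫⁻ _, 1 ∂ν :=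
        lintegral_mono_ae (hν01.mono fun y h => by
          simpa using ENNReal.ofReal_le_ofReal h.2)
      _ = 1 := by simp
  have hνfin : ∫⁻ y, ENNReal.ofReal (f y) ∂ν ≠ ⊤ :=
    (lt_of_le_of_lt hGν ENNReal.one_lt_top).ne
  have hmain : ∫⁻ y, ENNReal.ofReal (f y) ∂μ ≤
      ENNReal.ofReal e * ∫⁻ y, ENNReal.ofReal (f y) ∂ν + ENNReal.ofReal δ' := by
    rw [layer_trunc μ f hf hμ01, layer_trunc ν f hf hν01]
    have hmble : ∀ t : ℝ, MeasurableSet {y | t < f y} :=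
      fun t => measurableSet_lt measurable_const hf
    calc ∫⁻ t in Set.Ioc (0:ℝ) 1, μ {y | t < f y}
        ≤ ∫⁻ t in Set.Ioc (0:ℝ) 1,
            (ENNReal.ofReal e * ν {y | t < f y} + ENNReal.ofReal δ') :=
          lintegral_mono fun t => hDP _ (hmble t)
      _ = ENNReal.ofReal e * (∫⁻ t in Set.Ioc (0:ℝ) 1, ν {y | t < f y})
            + ENNReal.ofReal δ' := by
          rw [lintegral_add_right _ measurable_const,
            lintegral_const_mul' _ _ ENNReal.ofReal_ne_top, setLIntegral_const]
          simp [Real.volume_Ioc]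
  have hμint : ∫ y, f y ∂μ = (∫⁻ y, ENNReal.ofReal (f y) ∂μ).toReal :=
    integral_eq_lintegral_of_nonneg_ae (hμ01.mono fun y h => h.1)
      hf.aestronglyMeasurable
  have hνint : ∫ y, f y ∂ν = (∫⁻ y, ENNReal.ofReal (f y) ∂ν).toReal :=
    integral_eq_lintegral_of_nonneg_ae (hν01.mono fun y h => h.1)
      hf.aestronglyMeasurable
  rw [hμint, hνint]
  have hrhsfin : ENNReal.ofReal e * ∫⁻ y, ENNReal.ofReal (f y) ∂ν
      + ENNReal.ofReal δ' ≠ ⊤ := by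
    apply ENNReal.add_ne_top.mpr
    exact ⟨ENNReal.mul_ne_top ENNReal.ofReal_ne_top hνfin, ENNReal.ofReal_ne_top⟩
  have := ENNReal.toReal_mono hrhsfin hmain
  rwa [ENNReal.toReal_add (ENNReal.mul_ne_top ENNReal.ofReal_ne_top hνfin)
      ENNReal.ofReal_ne_top, ENNReal.toReal_mul, ENNReal.toReal_ofReal he,
      ENNReal.toReal_ofReal hδ'] at this

/-- A mechanism `A : X → Measure Y` (each `A x` a probability measure) satisfies
`(ε, δ)`-differential privacy with respect to the adjacency relation `Adj`. -/
def DiffPrivate {X Y : Type*} [MeasurableSpace Y] (Adj : X → X → Prop)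
    (A : X → Measure Y) (ε δ : ℝ) : Prop :=
  ∀ x x', Adj x x' → ∀ S : Set Y, MeasurableSet S →
    A x S ≤ ENNReal.ofReal (Real.exp ε) * A x' S + ENNReal.ofReal δ

/-- Theorem 1 (Robustness Condition): if the expected score of the label `c`
dominates all others by the stated margin, then the prediction on `x + α` is
still `c` for every attack `α` with `‖α‖ ≤ 1`. -/
theorem robustness_condition
    {E : Type*} [NormedAddCommGroup E] [NormedSpace ℝ E]
    (K : ℕ) (hK : 2 ≤ K) (ε δ p φ : ℝ) (hε : 0 ≤ ε) (hδ : 0 ≤ δ)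
    (hp0 : 0 ≤ p) (hp1 : p ≤ 1) (hφ0 : 0 ≤ φ) (hφ1 : φ ≤ 1)
    (M : E → Measure (Fin K → ℝ)) (hM : ∀ x, IsProbabilityMeasure (M x))
    (hbound : ∀ x, ∀ᵐ y ∂(M x), ∀ i, 0 ≤ y i ∧ y i ≤ 1)
    (hDP : DiffPrivate (fun x x' => ‖x - x'‖ ≤ 1) M (K * ε)
      (K * (1 - p) * Real.sqrt (1 - φ) * δ)) :
    ∀ (x : E) (c : Fin K),
      (∫ y, y c ∂(M x)) >
          Real.exp (2 * K * ε) *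
            ((Finset.univ.erase c).sup'
              (by
                obtain ⟨i, hi⟩ :=
                  Fintype.exists_ne_of_one_lt_card (by rw [Fintype.card_fin]; omega) c
                exact ⟨i, Finset.mem_erase.mpr ⟨hi, Finset.mem_univ i⟩⟩)
              fun i => ∫ y, y i ∂(M x))
            + (1 + Real.exp (K * ε)) * (K * (1 - p) * Real.sqrt (1 - φ) * δ) →
      ∀ α : E, ‖α‖ ≤ 1 → ∀ i : Fin K, i ≠ c →
        (∫ y, y c ∂(M (x + α))) > ∫ y, y i ∂(M (x + α)) := by
  intro x c hyp α hα i hi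
  haveI := hM x; haveI := hM (x + α)
  set e : ℝ := Real.exp (K * ε) with he_def
  set δ' : ℝ := (K : ℝ) * (1 - p) * Real.sqrt (1 - φ) * δ with hδ'_def
  have hδ' : 0 ≤ δ' :=
    mul_nonneg (mul_nonneg (mul_nonneg (Nat.cast_nonneg K) (by linarith))
      (Real.sqrt_nonneg _)) hδ
  have he : 0 < e := Real.exp_pos _
  have hadj1 : ‖x - (x + α)‖ ≤ 1 := by
    simpa using hα
  have hadj2 : ‖(x + α) - x‖ ≤ 1 := by
    simpa using hα
  have key : ∀ (u v : E), ‖u - v‖ ≤ 1 → ∀ j : Fin K,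
      ∫ y, y j ∂(M u) ≤ e * ∫ y, y j ∂(M v) + δ' := by
    intro u v huv j
    haveI := hM u; haveI := hM v
    exact exp_dp_bound (M u) (M v) (fun y => y j) (measurable_pi_apply j)
      ((hbound u).mono fun y h => h j) ((hbound v).mono fun y h => h j)
      e δ' he.le hδ' (hDP u v huv)
  have h1 : ∫ y, y c ∂(M x) ≤ e * ∫ y, y c ∂(M (x + α)) + δ' := key _ _ hadj1 c
  have h2 : ∫ y, y i ∂(M (x + α)) ≤ e * ∫ y, y i ∂(M x) + δ' := key _ _ hadj2 i
  have h3 : ∫ y, y i ∂(M x) ≤ (Finset.univ.erase c).sup'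
      (by
        obtain ⟨j, hj⟩ :=
          Fintype.exists_ne_of_one_lt_card (by rw [Fintype.card_fin]; omega) c
        exact ⟨j, Finset.mem_erase.mpr ⟨hj, Finset.mem_univ j⟩⟩)
      (fun i => ∫ y, y i ∂(M x)) :=
    Finset.le_sup' (fun j => ∫ y, y j ∂(M x)) (Finset.mem_erase.mpr ⟨hi, Finset.mem_univ i⟩)
  have hexp2 : Real.exp (2 * K * ε) = e * e := by
    rw [he_def, ← Real.exp_add]; ring_nf
  rw [hexp2] at hyp
  set S := (Finset.univ.erase c).sup' _ (fun i => ∫ y, y i ∂(M x))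
  nlinarith [mul_le_mul_of_nonneg_left h2 he.le, mul_le_mul_of_nonneg_left h3
    (mul_nonneg he.le he.le), he, h1, hyp]
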